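/- Let p, q > 1 with 1/p + 1/q = 1. For all t > 0, -e^{-t}/(1 - e^{-t})² + p·e^{-pt}/(1 - e^{-pt})² + q·e^{-qt}/(1 - e^{-qt})² < 0. -/

import Mathlib

open Real

lemma sinh_smul_lt {a x : ℝ} (ha : 1 < a) (hx : 0 < x) :
    a * Real.sinh x < Real.sinh (a * x) := by
  have hmono : StrictMonoOn (fun y => Real.sinh (a * y) - a * Real.sinh y) (Set.Ici 0) := by
    apply strictMonoOn_of_deriv_pos (convex_Ici 0)
    · fun_prop
    · intro y hy
      rw [interior_Ici] at hy
      have hy' : 0 < y := hy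
      have h1 : HasDerivAt (fun y => Real.sinh (a * y)) (Real.cosh (a * y) * a) y := by
        exact ((Real.hasDerivAt_sinh (a * y)).comp y ((hasDerivAt_id y).const_mul a)).congr_deriv (by simp)
      have h2 : HasDerivAt (fun y => Real.sinh (a * y) - a * Real.sinh y)
          (Real.cosh (a * y) * a - a * Real.cosh y) y :=
        h1.sub ((Real.hasDerivAt_sinh y).const_mul a)
      rw [h2.deriv]
      have hcosh : Real.cosh y < Real.cosh (a * y) := by
        rw [Real.cosh_lt_cosh]
        rw [abs_of_pos hy', abs_of_pos (by nlinarith : (0:ℝ) < a * y)]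
        nlinarith
      nlinarith [hcosh, Real.cosh_pos y]
  have h := hmono (Set.mem_Ici.mpr le_rfl) (Set.mem_Ici.mpr hx.le) hx
  simpa using h

lemma exp_div_sq_eq {s : ℝ} (hs : 0 < s) :
    Real.exp (-s) / (1 - Real.exp (-s)) ^ 2 = 1 / (4 * Real.sinh (s / 2) ^ 2) := by
  have hx1 : Real.exp (-s) < 1 := Real.exp_lt_one_iff.mpr (by linarith)
  have h0 : 0 < 1 - Real.exp (-s) := by linarith
  have hsinhpos : 0 < Real.sinh (s / 2) := Real.sinh_pos_iff.mpr (by linarith)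
  have hE : Real.exp (-s) = Real.exp (-(s / 2)) * Real.exp (-(s / 2)) := by
    rw [← Real.exp_add]; ring_nf
  have hsinh : 2 * Real.sinh (s / 2) = Real.exp (s / 2) - Real.exp (-(s / 2)) := by
    rw [Real.sinh_eq]; ring
  have hinv : Real.exp (-(s / 2)) * Real.exp (s / 2) = 1 := by
    rw [← Real.exp_add]; simp
  have hkey : Real.exp (-s) * (4 * Real.sinh (s / 2) ^ 2) = (1 - Real.exp (-s)) ^ 2 := by
    have h4 : 4 * Real.sinh (s / 2) ^ 2 = (Real.exp (s / 2) - Real.exp (-(s / 2))) ^ 2 := by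
      nlinarith [hsinh]
    rw [h4, hE]
    linear_combination (Real.exp (-(s / 2)) * Real.exp (s / 2) + 1
      - 2 * Real.exp (-(s / 2)) ^ 2) * hinv
  rw [div_eq_div_iff (pow_pos h0 2).ne' (by positivity)]
  linear_combination hkey

lemma key_lt {a t : ℝ} (ha : 1 < a) (ht : 0 < t) :
    a * Real.exp (-(a * t)) / (1 - Real.exp (-(a * t))) ^ 2
      < (1 / a) * (Real.exp (-t) / (1 - Real.exp (-t)) ^ 2) := by
  have ha0 : 0 < a := by linarith
  have hat : 0 < a * t := by positivity
  rw [show a * Real.exp (-(a * t)) / (1 - Real.exp (-(a * t))) ^ 2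
      = a * (Real.exp (-(a * t)) / (1 - Real.exp (-(a * t))) ^ 2) from by ring]
  rw [exp_div_sq_eq hat, exp_div_sq_eq ht]
  have hsinh : a * Real.sinh (t / 2) < Real.sinh (a * t / 2) := by
    have := sinh_smul_lt ha (by linarith : (0:ℝ) < t / 2)
    rwa [show a * (t / 2) = a * t / 2 from by ring] at this
  have hpos1 : 0 < Real.sinh (t / 2) := Real.sinh_pos_iff.mpr (by linarith)
  have hpos2 : 0 < Real.sinh (a * t / 2) := Real.sinh_pos_iff.mpr (by nlinarith)
  have hsq : a ^ 2 * Real.sinh (t / 2) ^ 2 < Real.sinh (a * t / 2) ^ 2 := by nlinarith [hsinh, mul_pos ha0 hpos1]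
  have hmain : a / (4 * Real.sinh (a * t / 2) ^ 2) < 1 / (a * (4 * Real.sinh (t / 2) ^ 2)) := by
    rw [div_lt_div_iff₀ (by positivity) (by positivity)]
    nlinarith [hsq]
  calc a * (1 / (4 * Real.sinh (a * t / 2) ^ 2))
      = a / (4 * Real.sinh (a * t / 2) ^ 2) := mul_one_div _ _
    _ < 1 / (a * (4 * Real.sinh (t / 2) ^ 2)) := hmain
    _ = 1 / a * (1 / (4 * Real.sinh (t / 2) ^ 2)) := by
        rw [div_mul_div_comm, one_mul]

theorem dht_at_zero_neg (p q : ℝ) (hp : 1 < p) (hq : 1 < q) (hpq : 1 / p + 1 / q = 1)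
    (t : ℝ) (ht : 0 < t) :
    -exp (-t) / (1 - exp (-t)) ^ 2 + p * exp (-(p * t)) / (1 - exp (-(p * t))) ^ 2
      + q * exp (-(q * t)) / (1 - exp (-(q * t))) ^ 2 < 0 := by
  have h1 := key_lt hp ht
  have h2 := key_lt hq ht
  have hsum : (1 / p) * (exp (-t) / (1 - exp (-t)) ^ 2)
      + (1 / q) * (exp (-t) / (1 - exp (-t)) ^ 2) = exp (-t) / (1 - exp (-t)) ^ 2 := by
    rw [← add_mul, hpq, one_mul]
  rw [neg_div]
  linarith [h1, h2, hsum]
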